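/- arXiv:2309.04866 — 2 statements merged into one kernel-verified Lean document; each statement's English description precedes it below -/
import Mathlib

section
/- Let K be a g×g symmetric positive definite integer matrix with δ = det(K), and suppose K·n = d·e for some positive integer vector n and d ∈ ℕ, with ρ = nδ/d ∈ ℤ (where n is the sum of entries of n). Let u = K⁻¹e ∈ ℚ^g. If gcd(δ, ρ) = 1, then the class of u generates the finite abelian group Π = K⁻¹ℤ^g / ℤ^g, i.e., u has order δ in Π. -/
/-- If `(K, n)` is a Wen datum with `ρ = nδ/d` coprime to `δ = det K`, then the
class of `u = K⁻¹e` generates the group `Π = K⁻¹ℤ^g/ℤ^g`, i.e. it has order `δ`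
in `ℚ^g/ℤ^g`. -/
theorem wen_u_generates (g : ℕ) (K : Matrix (Fin g) (Fin g) ℤ)
    (hsym : K.IsSymm) (hpos : (K.map (Int.cast : ℤ → ℝ)).PosDef)
    (n : Fin g → ℕ) (hn : ∀ i, 0 < n i) (d : ℕ) (hd : 0 < d)
    (hKn : K.mulVec (fun i => (n i : ℤ)) = fun _ => (d : ℤ))
    (ρ : ℤ) (hρ : (∑ i, (n i : ℤ)) * K.det = (d : ℤ) * ρ)
    (hcop : Int.gcd K.det ρ = 1)
    (u : Fin g → ℚ)
    (hu : u = (K.map (Int.cast : ℤ → ℚ))⁻¹.mulVec (fun _ => (1 : ℚ)))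
    (L : AddSubgroup (Fin g → ℚ))
    (hL : L = AddSubgroup.pi Set.univ fun _ => AddSubgroup.zmultiples (1 : ℚ)) :
    addOrderOf (QuotientAddGroup.mk u : (Fin g → ℚ) ⧸ L) = K.det.natAbs := by
  classical
  set A : Matrix (Fin g) (Fin g) ℚ := K.map (Int.cast : ℤ → ℚ) with hA
  -- det K > 0
  have hδR : (0 : ℝ) < (K.det : ℝ) := by
    have h := hpos.det_pos
    rwa [show K.map (Int.cast : ℤ → ℝ) = (Int.castRingHom ℝ).mapMatrix K from rfl,
      ← RingHom.map_det] at h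
  have hδpos : (0 : ℤ) < K.det := by exact_mod_cast hδR
  have hδQ : A.det = (K.det : ℚ) := by
    rw [hA, show K.map (Int.cast : ℤ → ℚ) = (Int.castRingHom ℚ).mapMatrix K from rfl,
      ← RingHom.map_det]; rfl
  have hδQne : ((K.det : ℚ)) ≠ 0 := by exact_mod_cast hδpos.ne'
  have hdQne : ((d : ℚ)) ≠ 0 := by exact_mod_cast hd.ne'
  have hunit : IsUnit A.det := by rw [hδQ]; exact isUnit_iff_ne_zero.2 hδQne
  -- A.mulVec (cast n) = d • e
  have hKnQ : A.mulVec (fun i => (n i : ℚ)) = fun _ => (d : ℚ) := by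
    funext j
    have h := congrFun hKn j
    simp only [Matrix.mulVec, dotProduct] at h ⊢
    have : ((∑ x, K j x * (n x : ℤ) : ℤ) : ℚ) = ((d : ℤ) : ℚ) := by exact_mod_cast h
    push_cast at this ⊢
    simpa [hA, Matrix.map_apply] using this
  -- u i = n i / d
  have hu' : ∀ i, u i = (n i : ℚ) / d := by
    have key : u = (d : ℚ)⁻¹ • fun i => (n i : ℚ) := by
      rw [hu]
      have h1 : A.mulVec ((d : ℚ)⁻¹ • fun i => (n i : ℚ)) = fun _ => (1 : ℚ) := by
        rw [Matrix.mulVec_smul, hKnQ]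
        funext j
        simp [inv_mul_cancel₀ hdQne]
      rw [← h1, Matrix.mulVec_mulVec, Matrix.nonsing_inv_mul A hunit, Matrix.one_mulVec]
    intro i
    rw [key]
    simp [div_eq_inv_mul]
  -- the adjugate vector : δ • u is integral
  set w : Fin g → ℤ := K.adjugate.mulVec (fun _ => 1) with hw
  have hδu : ∀ i, (K.det : ℚ) * u i = (w i : ℚ) := by
    intro i
    have hadj : A.adjugate = K.adjugate.map (Int.cast : ℤ → ℚ) := by
      rw [hA, show K.map (Int.cast : ℤ → ℚ) = (Int.castRingHom ℚ).mapMatrix K from rfl,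
        ← RingHom.map_adjugate]; rfl
    have : u = (K.det : ℚ)⁻¹ • A.adjugate.mulVec (fun _ => (1 : ℚ)) := by
      rw [hu, Matrix.inv_def, Ring.inverse_eq_inv, hδQ, Matrix.smul_mulVec]
    rw [this]
    have hcast : A.adjugate.mulVec (fun _ => (1 : ℚ)) i = (w i : ℚ) := by
      rw [hadj, hw]
      simp only [Matrix.mulVec, dotProduct, Matrix.map_apply]
      push_cast
      simp
    simp only [Pi.smul_apply, smul_eq_mul]
    rw [hcast, mul_inv_cancel_left₀ hδQne]
  -- so d ∣ det K * n i
  have hdvd : ∀ i, (d : ℤ) ∣ K.det * (n i : ℤ) := by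
    intro i
    refine ⟨w i, ?_⟩
    have := hδu i
    rw [hu' i] at this
    have hQ : (K.det : ℚ) * (n i : ℚ) = (d : ℚ) * (w i : ℚ) := by
      field_simp at this
      linarith [this]
    exact_mod_cast hQ
  -- membership criterion
  have hmem : ∀ m : ℕ, (m • (QuotientAddGroup.mk u : (Fin g → ℚ) ⧸ L) = 0)
      ↔ ∀ i, (d : ℤ) ∣ (m : ℤ) * (n i : ℤ) := by
    intro m
    rw [show (m • (QuotientAddGroup.mk u : (Fin g → ℚ) ⧸ L)) =
      QuotientAddGroup.mk (m • u) from rfl, QuotientAddGroup.eq_zero_iff, hL,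
      AddSubgroup.mem_pi]
    constructor
    · intro h i
      obtain ⟨k, hk⟩ := AddSubgroup.mem_zmultiples_iff.1 (h i (Set.mem_univ i))
      refine ⟨k, ?_⟩
      have hk' : (k : ℚ) = m * u i := by simpa using hk
      rw [hu' i] at hk'
      have hQ : ((m : ℤ) * (n i : ℤ) : ℚ) = ((d : ℤ) * k : ℚ) := by
        push_cast
        field_simp at hk'
        push_cast at hk' ⊢
        linarith [hk']
      exact_mod_cast hQ
    · intro h i _
      obtain ⟨k, hk⟩ := h i
      rw [AddSubgroup.mem_zmultiples_iff]
      refine ⟨k, ?_⟩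
      have hQ : ((m : ℤ) * (n i : ℤ) : ℚ) = ((d : ℤ) * k : ℚ) := by exact_mod_cast hk
      push_cast at hQ
      simp only [Pi.smul_apply, smul_eq_mul, nsmul_eq_mul, zsmul_eq_mul, mul_one]
      rw [hu' i]
      field_simp
      linarith [hQ]
  -- δ.natAbs kills u
  have hkill : K.det.natAbs • (QuotientAddGroup.mk u : (Fin g → ℚ) ⧸ L) = 0 := by
    rw [hmem]
    intro i
    have : ((K.det.natAbs : ℤ)) = K.det := Int.natAbs_of_nonneg hδpos.le
    rw [this]
    exact hdvd i
  -- conversely δ ∣ m whenever m kills u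
  have hmin : ∀ m : ℕ, (m • (QuotientAddGroup.mk u : (Fin g → ℚ) ⧸ L) = 0) →
      K.det.natAbs ∣ m := by
    intro m hm
    have h1 : ∀ i, (d : ℤ) ∣ (m : ℤ) * (n i : ℤ) := (hmem m).1 hm
    have h2 : (d : ℤ) ∣ (m : ℤ) * ∑ i, (n i : ℤ) := by
      rw [Finset.mul_sum]
      exact Finset.dvd_sum fun i _ => h1 i
    obtain ⟨t, ht⟩ := h2
    have h3 : K.det ∣ (m : ℤ) * ρ := by
      refine ⟨t, ?_⟩
      have hcalc : (d : ℤ) * ((m : ℤ) * ρ) = (d : ℤ) * (K.det * t) := by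
        calc (d : ℤ) * ((m : ℤ) * ρ) = (m : ℤ) * ((d : ℤ) * ρ) := by ring
        _ = (m : ℤ) * ((∑ i, (n i : ℤ)) * K.det) := by rw [hρ]
        _ = ((m : ℤ) * ∑ i, (n i : ℤ)) * K.det := by ring
        _ = ((d : ℤ) * t) * K.det := by rw [ht]
        _ = (d : ℤ) * (K.det * t) := by ring
      exact mul_left_cancel₀ (by exact_mod_cast hd.ne') hcalc
    have hco : IsCoprime K.det ρ := Int.isCoprime_iff_gcd_eq_one.2 hcop
    have h4 : K.det ∣ (m : ℤ) := hco.dvd_of_dvd_mul_right h3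
    exact Int.ofNat_dvd.1 ((Int.natAbs_dvd).2 h4)
  exact Nat.dvd_antisymm (addOrderOf_dvd_of_nsmul_eq_zero hkill)
    (hmin _ (addOrderOf_nsmul_eq_zero _))
end

section
/- Let τ = s + it with t ≠ 0, K a g×g symmetric positive definite integer matrix, Ω = τK, and Γ = ℤ^g + Ωℤ^g ⊂ ℂ^g. Identify the antidual V‡ = Hom_{ℂ̄}(ℂ^g, ℂ) with ℂ^g via the basis (σ₁,…,σ_g) where σ_j(λ) = conj(λ_j), and equip V‡ × ℂ^g with the real pairing ⟨l, v⟩ = Im(l(v)). Then the dual lattice Γ‡ = { l ∈ V‡ : ⟨l, γ⟩ ∈ ℤ for all γ ∈ Γ } equals (1/t)(K⁻¹ℤ^g + τℤ^g) under this identification. -/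
open Complex Matrix

/-- Dual lattice computation: for `τ = s + it` with `t ≠ 0`, `K` symmetric
positive definite integral and `Ω = τK`, the dual lattice of
`Γ = ℤ^g + Ωℤ^g ⊂ ℂ^g` with respect to the pairing `⟨l, v⟩ = Im(l(v))`
(identifying the antidual of `ℂ^g` with `ℂ^g` via the basis `σ_j(λ) = conj λ_j`,
so `l(v) = Σ_j w_j conj(v_j)`) equals `(1/t)(K⁻¹ℤ^g + τℤ^g)`. -/
theorem dual_lattice_computation (g : ℕ) (τ : ℂ) (hτ : τ.im ≠ 0)
    (K : Matrix (Fin g) (Fin g) ℤ) (hsym : K.IsSymm)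
    (hpos : (K.map (Int.cast : ℤ → ℝ)).PosDef)
    (Ω : Matrix (Fin g) (Fin g) ℂ) (hΩ : Ω = τ • K.map (Int.cast : ℤ → ℂ)) :
    {w : Fin g → ℂ | ∀ v : Fin g → ℂ,
        (∃ m n : Fin g → ℤ,
          v = fun i => (m i : ℂ) + Ω.mulVec (fun j => (n j : ℂ)) i) →
        ∃ z : ℤ, (∑ j, w j * (starRingEnd ℂ) (v j)).im = z}
      = {w : Fin g → ℂ | ∃ u n : Fin g → ℤ,
          w = fun j => (1 / (τ.im : ℂ)) *
            ((((K.map (Int.cast : ℤ → ℚ))⁻¹.mulVec (fun i => (u i : ℚ)) j : ℚ) : ℂ)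
              + τ * (n j : ℂ))} := by
  set s : ℝ := τ.re with hs
  set t : ℝ := τ.im with ht
  set Kq : Matrix (Fin g) (Fin g) ℚ := K.map (Int.cast : ℤ → ℚ) with hKq
  set Kr : Matrix (Fin g) (Fin g) ℝ := K.map (Int.cast : ℤ → ℝ) with hKr
  have hdetmapR : ((K.det : ℝ)) = Kr.det := by
    have := RingHom.map_det (Int.castRingHom ℝ) K
    simpa [RingHom.mapMatrix_apply] using this
  have hdetmapQ : ((K.det : ℚ)) = Kq.det := by
    have := RingHom.map_det (Int.castRingHom ℚ) K
    simpa [RingHom.mapMatrix_apply] using this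
  have hdetK : K.det ≠ 0 := by
    intro h
    have := hpos.det_pos
    rw [← hdetmapR, h] at this
    simp at this
  have hQdet : IsUnit Kq.det := by
    rw [← hdetmapQ]; exact isUnit_iff_ne_zero.2 (by exact_mod_cast hdetK)
  have hRdet : IsUnit Kr.det := by
    rw [← hdetmapR]; exact isUnit_iff_ne_zero.2 (by exact_mod_cast hdetK)
  have hKqinv : ∀ x : Fin g → ℚ, Kq *ᵥ (Kq⁻¹ *ᵥ x) = x := by
    intro x
    rw [mulVec_mulVec, Matrix.mul_nonsing_inv _ hQdet, one_mulVec]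
  -- casting Kq-mulVec to ℝ
  have hcast : ∀ (d : Fin g → ℚ) (i : Fin g),
      ((Kq *ᵥ d) i : ℝ) = (Kr *ᵥ (fun j => ((d j : ℚ) : ℝ))) i := by
    intro d i
    have h := RingHom.map_mulVec (Rat.castHom ℝ) Kq d i
    simp only [Rat.coe_castHom, Function.comp] at h
    rw [h]
    congr 1
  ext w
  simp only [Set.mem_setOf_eq]
  constructor
  · intro hw
    have h1 : ∀ j, ∃ z : ℤ, (w j).im = (z : ℝ) := by
      intro j
      obtain ⟨z, hz⟩ := hw _ ⟨Pi.single j 1, 0, rfl⟩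
      refine ⟨z, ?_⟩
      rw [← hz]
      congr 1
      simp only [Pi.zero_apply, Int.cast_zero]
      simp only [show (fun _ : Fin g => (0:ℂ)) = 0 from rfl, mulVec_zero, Pi.zero_apply,
        add_zero, Pi.single_apply, apply_ite, Int.cast_one, Int.cast_zero, _root_.map_one,
        _root_.map_zero, mul_ite, mul_one, mul_zero]
      simp
    have h2 : ∀ i, ∃ z : ℤ, (∑ j, w j * ((starRingEnd ℂ) τ * (K j i : ℂ))).im = (z : ℝ) := by
      intro i
      obtain ⟨z, hz⟩ := hw _ ⟨0, Pi.single i 1, rfl⟩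
      refine ⟨z, ?_⟩
      rw [← hz]
      congr 1
      refine Finset.sum_congr rfl fun j _ => ?_
      congr 1
      simp only [Pi.zero_apply, Int.cast_zero, zero_add, hΩ, smul_mulVec, Pi.smul_apply,
        smul_eq_mul, mulVec, dotProduct, map_apply, Pi.single_apply, apply_ite, Int.cast_one,
        Int.cast_zero, mul_ite, mul_one, mul_zero, Finset.sum_ite_eq', Finset.mem_univ, if_true,
        _root_.map_mul]
      simp
    choose N hN using h1
    choose C hC using h2
    -- compute the imaginary part in h2
    have hC' : ∀ i, ∑ j, (K j i : ℝ) * (s * (N j : ℝ) - t * (w j).re) = (C i : ℝ) := by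
      intro i
      rw [← hC i, Complex.im_sum]
      refine Finset.sum_congr rfl fun j _ => ?_
      have : ((K j i : ℂ)) = ((K j i : ℝ) : ℂ) := by push_cast; ring
      rw [this]
      simp [Complex.mul_im, Complex.mul_re, hN j]
      ring
    set u : Fin g → ℤ := fun i => -C i with hu
    set d : Fin g → ℚ := Kq⁻¹ *ᵥ (fun i => (u i : ℚ)) with hd
    have hdr : ∀ j, ((d j : ℚ) : ℝ) = t * (w j).re - s * (N j : ℝ) := by
      have hKx : Kr *ᵥ (fun j => ((d j : ℚ) : ℝ)) = Kr *ᵥ (fun j => t * (w j).re - s * (N j : ℝ)) := by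
        funext i
        rw [← hcast d i, hd, hKqinv]
        have : (Kr *ᵥ fun j => t * (w j).re - s * (N j : ℝ)) i
            = ∑ j, (K j i : ℝ) * (t * (w j).re - s * (N j : ℝ)) := by
          rw [mulVec, dotProduct]
          refine Finset.sum_congr rfl fun j _ => ?_
          rw [hKr, map_apply, hsym.apply i j]
        rw [this]
        have : ∑ j, (K j i : ℝ) * (t * (w j).re - s * (N j : ℝ))
            = -∑ j, (K j i : ℝ) * (s * (N j : ℝ) - t * (w j).re) := by
          rw [← Finset.sum_neg_distrib]
          exact Finset.sum_congr rfl fun j _ => by ring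
        rw [this, hC' i, hu]
        push_cast
        ring
      have hinj : Function.Injective Kr.mulVec :=
        mulVec_injective_iff_isUnit.2 ((Matrix.isUnit_iff_isUnit_det _).mpr hRdet)
      exact fun j => congrFun (hinj hKx) j
    refine ⟨u, N, ?_⟩
    funext j
    rw [show (1 / (τ.im : ℂ)) = ((t⁻¹ : ℝ) : ℂ) by rw [one_div, ← Complex.ofReal_inv, ht]]
    apply Complex.ext
    · simp only [Complex.mul_re, Complex.add_re, Complex.add_im, Complex.ofReal_re,
        Complex.ofReal_im, Complex.ratCast_re, Complex.ratCast_im, Complex.mul_im,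
        Complex.intCast_re, Complex.intCast_im]
      rw [← hd]  -- ensure d matches
      rw [hdr j]
      field_simp
      rw [hs]; ring
    · simp only [Complex.mul_im, Complex.add_re, Complex.add_im, Complex.ofReal_re,
        Complex.ofReal_im, Complex.ratCast_re, Complex.ratCast_im, Complex.mul_re,
        Complex.intCast_re, Complex.intCast_im]
      rw [hN j]
      field_simp
      rw [ht]; ring
  · rintro ⟨u, N, hwdef⟩ v ⟨m, n, hv⟩
    subst hv
    set d : Fin g → ℚ := Kq⁻¹ *ᵥ (fun i => (u i : ℚ)) with hd
    have hKqsym : Kqᵀ = Kq := by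
      rw [hKq, ← Matrix.transpose_map, hsym]
    have hrat : ∑ j, d j * ((K *ᵥ n) j : ℚ) = ∑ j, (u j : ℚ) * (n j : ℚ) := by
      have h1 : (fun j => ((K *ᵥ n) j : ℚ)) = Kq *ᵥ (fun k => (n k : ℚ)) := by
        funext j
        have := RingHom.map_mulVec (Int.castRingHom ℚ) K n j
        exact this
      have h2 : d ᵥ* Kq = fun i => (u i : ℚ) := by
        rw [← hKqsym, vecMul_transpose, hd, hKqinv]
      calc ∑ j, d j * ((K *ᵥ n) j : ℚ)
          = d ⬝ᵥ (Kq *ᵥ fun k => (n k : ℚ)) := by rw [← h1]; rfl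
        _ = (d ᵥ* Kq) ⬝ᵥ (fun k => (n k : ℚ)) := by rw [Matrix.dotProduct_mulVec]
        _ = ∑ j, (u j : ℚ) * (n j : ℚ) := by rw [h2]; rfl
    have hvj : ∀ j, ((m j : ℂ) + (Ω *ᵥ fun k => ((n k : ℤ) : ℂ)) j)
        = (m j : ℂ) + τ * (((K *ᵥ n) j : ℤ) : ℂ) := by
      intro j
      rw [hΩ, smul_mulVec]
      congr 1
      simp only [Pi.smul_apply, smul_eq_mul]
      congr 1
      rw [mulVec, dotProduct, mulVec, dotProduct]
      push_cast
      rfl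
    have hterm : ∀ j, (w j * (starRingEnd ℂ) ((m j : ℂ) + (Ω *ᵥ fun k => ((n k : ℤ) : ℂ)) j)).im
        = (m j : ℝ) * (N j : ℝ) - ((d j : ℚ) : ℝ) * (((K *ᵥ n) j : ℤ) : ℝ) := by
      intro j
      rw [hvj j]
      simp only [hwdef]
      rw [show (1 / (τ.im : ℂ)) = ((τ.im⁻¹ : ℝ) : ℂ) by rw [one_div, ← Complex.ofReal_inv]]
      simp only [map_add, _root_.map_mul, map_intCast, Complex.conj_ofReal,
        Complex.mul_im, Complex.mul_re, Complex.add_im, Complex.add_re, Complex.ofReal_re,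
        Complex.ofReal_im, Complex.ratCast_re, Complex.ratCast_im, Complex.intCast_re,
        Complex.intCast_im, Complex.conj_re, Complex.conj_im]
      field_simp
      have hτ' : τ.im ≠ 0 := hτ
      field_simp
      ring
    refine ⟨(∑ j, m j * N j) - ∑ j, u j * n j, ?_⟩
    rw [Complex.im_sum]
    rw [Finset.sum_congr rfl fun j _ => hterm j, Finset.sum_sub_distrib]
    have hR : ∑ j, ((d j : ℚ) : ℝ) * (((K *ᵥ n) j : ℤ) : ℝ)
        = ((∑ j, (u j : ℚ) * (n j : ℚ) : ℚ) : ℝ) := by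
      rw [← hrat]
      push_cast
      rfl
    rw [hR]
    push_cast
    ring
end
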